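/- arXiv:1605.03475 — 2 statements merged into one kernel-verified Lean document; each statement's English description precedes it below -/
import Mathlib

section
/- Let H ∈ (1/2, 1) and set ∂_θ K_H(θ, v) = c_H (H - 1/2) (θ/v)^{H - 1/2} (θ - v)^{H - 3/2} for 0 < v < θ. Then for all θ_1, θ_2 > 0 and all 0 < s < min(θ_1, θ_2), ∫_0^s ∂_θ K_H(θ_1, v) ∂_θ K_H(θ_2, v) dv ≤ (c_H² (H - 1/2)² / (2 - 2H)) · (max(θ_1,θ_2) - s)^{H - 1/2} · (min(θ_1,θ_2) - s)^{H - 3/2}. -/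
open MeasureTheory Real

private theorem sqrt_amgm (x y : ℝ) (hx : 0 ≤ x) (hy : 0 ≤ y) :
    Real.sqrt x * Real.sqrt y ≤ (x + y)/2 := by
  nlinarith [sq_nonneg (Real.sqrt x - Real.sqrt y), Real.sq_sqrt hx, Real.sq_sqrt hy,
    Real.sqrt_nonneg x, Real.sqrt_nonneg y]

/-- The constant `c_H` in the Volterra kernel of fractional Brownian motion. -/
noncomputable def cH (H : ℝ) : ℝ :=
  Real.sqrt ((2*H * Real.Gamma (3/2 - H)) / (Real.Gamma (H + 1/2) * Real.Gamma (2 - 2*H)))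

set_option maxHeartbeats 2000000 in
/-- For `H ∈ (1/2,1)`, `θ₁, θ₂ > 0` and `0 < s < min θ₁ θ₂`,
`∫_0^s ∂_θK_H(θ₁,v) ∂_θK_H(θ₂,v) dv ≤ (c_H²(H-1/2)²/(2-2H)) (θ₁∨θ₂-s)^{H-1/2} (θ₁∧θ₂-s)^{H-3/2}`,
where `∂_θK_H(θ,v) = c_H (H-1/2) (θ/v)^{H-1/2} (θ-v)^{H-3/2}`. -/
theorem kernel_deriv_product_integral_le
    (H : ℝ) (hH : H ∈ Set.Ioo (1/2 : ℝ) 1) (θ₁ θ₂ s : ℝ)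
    (h₁ : 0 < θ₁) (h₂ : 0 < θ₂) (hs : 0 < s) (hs' : s < min θ₁ θ₂) :
    (∫ v in Set.Ioo (0:ℝ) s,
        (cH H * (H - 1/2) * (θ₁/v) ^ (H - 1/2) * (θ₁ - v) ^ (H - 3/2)) *
        (cH H * (H - 1/2) * (θ₂/v) ^ (H - 1/2) * (θ₂ - v) ^ (H - 3/2)))
      ≤ (cH H)^2 * (H - 1/2)^2 / (2 - 2*H) *
          (max θ₁ θ₂ - s) ^ (H - 1/2) * (min θ₁ θ₂ - s) ^ (H - 3/2) := by
  obtain ⟨hH1, hH2⟩ := hH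
  have hs1 : s < θ₁ := lt_of_lt_of_le hs' (min_le_left _ _)
  have hs2 : s < θ₂ := lt_of_lt_of_le hs' (min_le_right _ _)
  have ht1s : 0 < θ₁ - s := by linarith
  have ht2s : 0 < θ₂ - s := by linarith
  have h2H : (0:ℝ) < 2 - 2*H := by linarith
  set c : ℝ := (cH H)^2 * (H - 1/2)^2 with hc
  have hc0 : 0 ≤ c := by positivity
  set f : ℝ → ℝ := fun v =>
      (cH H * (H - 1/2) * (θ₁/v) ^ (H - 1/2) * (θ₁ - v) ^ (H - 3/2)) *
      (cH H * (H - 1/2) * (θ₂/v) ^ (H - 1/2) * (θ₂ - v) ^ (H - 3/2)) with hf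
  set K : ℝ := c * (θ₁ ^ (H-1) * θ₂ ^ (H-1)) / (2 - 2*H) with hK
  have hK0 : 0 ≤ K := by positivity
  set g : ℝ → ℝ := fun v => v ^ (2-2*H) * ((θ₁ - v) ^ (H-1) * (θ₂ - v) ^ (H-1)) with hg
  set g' : ℝ → ℝ := fun v =>
      (2-2*H) * v ^ (1-2*H) * ((θ₁ - v) ^ (H-1) * (θ₂ - v) ^ (H-1))
      + v ^ (2-2*H) * ((1-H) * (θ₁ - v) ^ (H-2) * (θ₂ - v) ^ (H-1)
                     + (θ₁ - v) ^ (H-1) * ((1-H) * (θ₂ - v) ^ (H-2))) with hg'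
  -- derivative of `g`
  have hderiv : ∀ v ∈ Set.Ioo (0:ℝ) s, HasDerivAt g (g' v) v := by
    intro v hv
    obtain ⟨hv0, hvs⟩ := hv
    have ht1 : 0 < θ₁ - v := by linarith
    have ht2 : 0 < θ₂ - v := by linarith
    have d1 : HasDerivAt (fun x : ℝ => x ^ (2-2*H)) ((2-2*H) * v ^ (1-2*H)) v := by
      have h := Real.hasDerivAt_rpow_const (x := v) (p := 2-2*H) (Or.inl (ne_of_gt hv0))
      convert h using 2
      ring
    have d2 : HasDerivAt (fun x : ℝ => (θ₁ - x) ^ (H-1)) ((1-H) * (θ₁ - v) ^ (H-2)) v := by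
      have hb : HasDerivAt (fun x : ℝ => θ₁ - x) (-1) v := by
        simpa using (hasDerivAt_id v).const_sub θ₁
      have h := (Real.hasDerivAt_rpow_const (x := θ₁ - v) (p := H-1)
        (Or.inl (ne_of_gt ht1))).comp v hb
      refine h.congr_deriv ?_
      rw [show H - 1 - 1 = H - 2 by ring]
      ring
    have d3 : HasDerivAt (fun x : ℝ => (θ₂ - x) ^ (H-1)) ((1-H) * (θ₂ - v) ^ (H-2)) v := by
      have hb : HasDerivAt (fun x : ℝ => θ₂ - x) (-1) v := by
        simpa using (hasDerivAt_id v).const_sub θ₂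
      have h := (Real.hasDerivAt_rpow_const (x := θ₂ - v) (p := H-1)
        (Or.inl (ne_of_gt ht2))).comp v hb
      refine h.congr_deriv ?_
      rw [show H - 1 - 1 = H - 2 by ring]
      ring
    exact d1.mul (d2.mul d3)
  -- continuity of `g` on `[0,s]`
  have hcont : ContinuousOn g (Set.Icc 0 s) := by
    apply ContinuousOn.mul
    · exact continuousOn_id.rpow_const (fun x _ => Or.inr (by linarith))
    · apply ContinuousOn.mul
      · exact (continuousOn_const.sub continuousOn_id).rpow_const
          (fun x hx => Or.inl (by intro h; simp only [Pi.sub_apply, id_eq] at h; have := hx.2; linarith))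
      · exact (continuousOn_const.sub continuousOn_id).rpow_const
          (fun x hx => Or.inl (by intro h; simp only [Pi.sub_apply, id_eq] at h; have := hx.2; linarith))
  -- the main pointwise bound `f v ≤ K * g' v` on `(0,s)`
  have hfK : ∀ v ∈ Set.Ioo (0:ℝ) s, f v ≤ K * g' v := by
    intro v hv
    obtain ⟨hv0, hvs⟩ := hv
    have ht1 : 0 < θ₁ - v := by linarith
    have ht2 : 0 < θ₂ - v := by linarith
    have eθ₁ : (θ₁/v) ^ (H-1/2) = θ₁ ^ (H-1) * Real.sqrt θ₁ * (v ^ (H-1/2))⁻¹ := by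
      rw [Real.div_rpow h₁.le hv0.le, div_eq_mul_inv, Real.sqrt_eq_rpow,
        ← Real.rpow_add h₁, show H - 1 + 1/2 = H - 1/2 by ring]
    have eθ₂ : (θ₂/v) ^ (H-1/2) = θ₂ ^ (H-1) * Real.sqrt θ₂ * (v ^ (H-1/2))⁻¹ := by
      rw [Real.div_rpow h₂.le hv0.le, div_eq_mul_inv, Real.sqrt_eq_rpow,
        ← Real.rpow_add h₂, show H - 1 + 1/2 = H - 1/2 by ring]
    have et1 : (θ₁ - v) ^ (H-3/2) = (θ₁ - v) ^ (H-2) * Real.sqrt (θ₁ - v) := by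
      rw [Real.sqrt_eq_rpow, ← Real.rpow_add ht1, show H - 2 + 1/2 = H - 3/2 by ring]
    have et2 : (θ₂ - v) ^ (H-3/2) = (θ₂ - v) ^ (H-2) * Real.sqrt (θ₂ - v) := by
      rw [Real.sqrt_eq_rpow, ← Real.rpow_add ht2, show H - 2 + 1/2 = H - 3/2 by ring]
    have ev : (v ^ (H-1/2))⁻¹ * (v ^ (H-1/2))⁻¹ = v ^ (1-2*H) := by
      rw [← Real.rpow_neg hv0.le, ← Real.rpow_add hv0,
        show -(H-1/2) + -(H-1/2) = 1-2*H by ring]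
    have et1' : (θ₁ - v) ^ (H-1) = (θ₁ - v) ^ (H-2) * (θ₁ - v) := by
      rw [show H - 1 = H - 2 + 1 by ring, Real.rpow_add ht1, Real.rpow_one]
    have et2' : (θ₂ - v) ^ (H-1) = (θ₂ - v) ^ (H-2) * (θ₂ - v) := by
      rw [show H - 1 = H - 2 + 1 by ring, Real.rpow_add ht2, Real.rpow_one]
    have ev2 : v ^ (2-2*H) = v ^ (1-2*H) * v := by
      rw [show 2 - 2*H = 1 - 2*H + 1 by ring, Real.rpow_add hv0, Real.rpow_one]
    have lhs_eq : f v = c * (θ₁ ^ (H-1) * θ₂ ^ (H-1)) *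
        (v ^ (1-2*H) * ((θ₁ - v) ^ (H-2) * (θ₂ - v) ^ (H-2))) *
        (Real.sqrt θ₁ * Real.sqrt θ₂ * (Real.sqrt (θ₁ - v) * Real.sqrt (θ₂ - v))) := by
      rw [hf, hc]
      simp only [eθ₁, eθ₂, et1, et2, ← ev]
      ring
    have rhs_eq : K * g' v = c * (θ₁ ^ (H-1) * θ₂ ^ (H-1)) *
        (v ^ (1-2*H) * ((θ₁ - v) ^ (H-2) * (θ₂ - v) ^ (H-2))) *
        ((θ₁ - v) * (θ₂ - v) + v * ((θ₁ - v) + (θ₂ - v)) / 2) := by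
      rw [hK, hg']
      simp only [et1', et2', ev2]
      field_simp
      ring
    rw [lhs_eq, rhs_eq]
    have hD : 0 ≤ c * (θ₁ ^ (H-1) * θ₂ ^ (H-1)) *
        (v ^ (1-2*H) * ((θ₁ - v) ^ (H-2) * (θ₂ - v) ^ (H-2))) := by positivity
    apply mul_le_mul_of_nonneg_left _ hD
    -- AM–GM step
    have e1 : Real.sqrt θ₁ * Real.sqrt θ₂ * (Real.sqrt (θ₁ - v) * Real.sqrt (θ₂ - v))
        = Real.sqrt (θ₂ * (θ₁ - v)) * Real.sqrt (θ₁ * (θ₂ - v)) := by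
      rw [Real.sqrt_mul h₂.le, Real.sqrt_mul h₁.le]
      ring
    rw [e1]
    have key2 := sqrt_amgm (θ₂ * (θ₁ - v)) (θ₁ * (θ₂ - v))
      (by positivity) (by positivity)
    nlinarith [key2]
  -- integrability of `f` on `[0,s]`
  set C : ℝ := c * θ₁ ^ (H-1/2) * θ₂ ^ (H-1/2) * ((θ₁-s) ^ (H-3/2) * (θ₂-s) ^ (H-3/2))
    with hC
  have hC0 : 0 ≤ C := by positivity
  have hfb : ∀ v ∈ Set.Icc (0:ℝ) s, f v ≤ C * v ^ (1-2*H) := by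
    intro v hv
    obtain ⟨hv0, hvs⟩ := hv
    rcases eq_or_lt_of_le hv0 with h0 | hv0
    · rw [hf, ← h0]
      simp only [div_zero, Real.zero_rpow (show H - 1/2 ≠ 0 by intro h; linarith)]
      rw [Real.zero_rpow (show 1 - 2*H ≠ 0 by intro h; linarith)]
      simp
    · have ht1 : 0 < θ₁ - v := by linarith
      have ht2 : 0 < θ₂ - v := by linarith
      have eθ₁ : (θ₁/v) ^ (H-1/2) = θ₁ ^ (H-1/2) * (v ^ (H-1/2))⁻¹ := by
        rw [Real.div_rpow h₁.le hv0.le, div_eq_mul_inv]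
      have eθ₂ : (θ₂/v) ^ (H-1/2) = θ₂ ^ (H-1/2) * (v ^ (H-1/2))⁻¹ := by
        rw [Real.div_rpow h₂.le hv0.le, div_eq_mul_inv]
      have ev : (v ^ (H-1/2))⁻¹ * (v ^ (H-1/2))⁻¹ = v ^ (1-2*H) := by
        rw [← Real.rpow_neg hv0.le, ← Real.rpow_add hv0,
          show -(H-1/2) + -(H-1/2) = 1-2*H by ring]
      have lhs_eq : f v = c * θ₁ ^ (H-1/2) * θ₂ ^ (H-1/2) *
          ((θ₁ - v) ^ (H-3/2) * (θ₂ - v) ^ (H-3/2)) * v ^ (1-2*H) := by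
        rw [hf, hc]
        simp only [eθ₁, eθ₂, ← ev]
        ring
      rw [lhs_eq, hC]
      have b1 : (θ₁ - v) ^ (H-3/2) ≤ (θ₁ - s) ^ (H-3/2) :=
        Real.rpow_le_rpow_of_nonpos ht1s (by linarith) (by linarith)
      have b2 : (θ₂ - v) ^ (H-3/2) ≤ (θ₂ - s) ^ (H-3/2) :=
        Real.rpow_le_rpow_of_nonpos ht2s (by linarith) (by linarith)
      have hv1 : (0:ℝ) ≤ v ^ (1-2*H) := Real.rpow_nonneg hv0.le _
      have hcc : (0:ℝ) ≤ c * θ₁ ^ (H-1/2) * θ₂ ^ (H-1/2) := by positivity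
      have := mul_le_mul (mul_le_mul b1 b2 (Real.rpow_nonneg ht2.le _)
        (Real.rpow_nonneg ht1s.le _)) (le_refl (v ^ (1-2*H))) hv1
        (by positivity)
      nlinarith [mul_le_mul_of_nonneg_left this hcc]
  have hfmeas : Measurable f := by
    rw [hf]
    fun_prop
  have hbint : IntegrableOn (fun v => C * v ^ (1-2*H)) (Set.Icc 0 s) := by
    have := (intervalIntegral.intervalIntegrable_rpow' (a := 0) (b := s)
      (show (-1:ℝ) < 1-2*H by linarith)).const_mul C
    rwa [intervalIntegrable_iff_integrableOn_Icc_of_le hs.le] at this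
  have hf0 : ∀ v ∈ Set.Icc (0:ℝ) s, 0 ≤ f v := by
    intro v hv
    simp only [hf]
    rcases eq_or_lt_of_le hv.1 with h0 | hv0
    · rw [← h0]
      simp only [div_zero, Real.zero_rpow (show H - 1/2 ≠ 0 by intro h; linarith)]
      simp
    · have ht1 : 0 < θ₁ - v := by linarith [hv.2]
      have ht2 : 0 < θ₂ - v := by linarith [hv.2]
      have hcH : 0 ≤ cH H := Real.sqrt_nonneg _
      have hH12 : (0:ℝ) ≤ H - 1/2 := by linarith
      exact mul_nonneg
        (mul_nonneg (mul_nonneg (mul_nonneg hcH hH12)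
          (Real.rpow_nonneg (div_nonneg h₁.le hv0.le) _)) (Real.rpow_nonneg ht1.le _))
        (mul_nonneg (mul_nonneg (mul_nonneg hcH hH12)
          (Real.rpow_nonneg (div_nonneg h₂.le hv0.le) _)) (Real.rpow_nonneg ht2.le _))
  have hfint : IntegrableOn f (Set.Icc 0 s) := by
    apply Integrable.mono hbint (hfmeas.aestronglyMeasurable.restrict)
    rw [ae_restrict_iff' measurableSet_Icc]
    filter_upwards with v hv
    rw [Real.norm_eq_abs, Real.norm_eq_abs, abs_of_nonneg (hf0 v hv)]
    exact le_trans (hfb v hv) (le_abs_self _)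
  -- FTC inequality
  have key : (∫ v in (0:ℝ)..s, f v) ≤ K * g s - K * g 0 :=
    intervalIntegral.integral_le_sub_of_hasDeriv_right_of_le hs.le
      (continuousOn_const.mul hcont)
      (fun x hx => ((hderiv x hx).const_mul K).hasDerivWithinAt)
      hfint hfK
  have hg0 : g 0 = 0 := by
    rw [hg]
    simp [Real.zero_rpow h2H.ne']
  rw [hg0, mul_zero, sub_zero] at key
  have heq : (∫ v in Set.Ioo (0:ℝ) s, f v) = ∫ v in (0:ℝ)..s, f v := by
    rw [intervalIntegral.integral_of_le hs.le, MeasureTheory.integral_Ioc_eq_integral_Ioo]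
  -- final algebraic bound `K * g s ≤ RHS`
  have hfin : K * g s ≤ c / (2 - 2*H) * (max θ₁ θ₂ - s) ^ (H - 1/2) *
      (min θ₁ θ₂ - s) ^ (H - 3/2) := by
    have hone : θ₁ ^ (H-1) * θ₂ ^ (H-1) * s ^ (2-2*H) ≤ 1 := by
      have b1 : θ₁ ^ (H-1) ≤ s ^ (H-1) :=
        Real.rpow_le_rpow_of_nonpos hs hs1.le (by linarith)
      have b2 : θ₂ ^ (H-1) ≤ s ^ (H-1) :=
        Real.rpow_le_rpow_of_nonpos hs hs2.le (by linarith)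
      have e : s ^ (H-1) * s ^ (H-1) * s ^ (2-2*H) = 1 := by
        rw [← Real.rpow_add hs, ← Real.rpow_add hs,
          show H - 1 + (H-1) + (2-2*H) = 0 by ring, Real.rpow_zero]
      calc θ₁ ^ (H-1) * θ₂ ^ (H-1) * s ^ (2-2*H)
          ≤ s ^ (H-1) * s ^ (H-1) * s ^ (2-2*H) := by
            apply mul_le_mul_of_nonneg_right _ (Real.rpow_nonneg hs.le _)
            exact mul_le_mul b1 b2 (Real.rpow_nonneg h₂.le _) (Real.rpow_nonneg hs.le _)
        _ = 1 := e
    -- (θ₁-s)^(H-1) (θ₂-s)^(H-1) ≤ (M-s)^(H-1/2) (m-s)^(H-3/2)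
    have hmm : (θ₁ - s) ^ (H-1) * (θ₂ - s) ^ (H-1)
        ≤ (max θ₁ θ₂ - s) ^ (H - 1/2) * (min θ₁ θ₂ - s) ^ (H - 3/2) := by
      have main : ∀ a b : ℝ, 0 < a - s → 0 < b - s → a ≤ b →
          (a - s) ^ (H-1) * (b - s) ^ (H-1)
            ≤ (b - s) ^ (H - 1/2) * (a - s) ^ (H - 3/2) := by
        intro a b ha hb hab
        have e1 : (b - s) ^ (H-1) = (b - s) ^ (H - 1/2) * (b - s) ^ (-(1/2):ℝ) := by
          rw [← Real.rpow_add hb, show H - 1/2 + -(1/2) = H - 1 by ring]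
        have e2 : (a - s) ^ (H - 3/2) = (a - s) ^ (H-1) * (a - s) ^ (-(1/2):ℝ) := by
          rw [← Real.rpow_add ha, show H - 1 + -(1/2) = H - 3/2 by ring]
        have hhalf : (b - s) ^ (-(1/2):ℝ) ≤ (a - s) ^ (-(1/2):ℝ) :=
          Real.rpow_le_rpow_of_nonpos ha (by linarith) (by norm_num)
        calc (a - s) ^ (H-1) * (b - s) ^ (H-1)
            = (b - s) ^ (H-1) * (a - s) ^ (H-1) := by ring
          _ = (b - s) ^ (H - 1/2) * (b - s) ^ (-(1/2):ℝ) * (a - s) ^ (H-1) := by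
              rw [e1]
          _ ≤ (b - s) ^ (H - 1/2) * (a - s) ^ (-(1/2):ℝ) * (a - s) ^ (H-1) := by
              apply mul_le_mul_of_nonneg_right _ (Real.rpow_nonneg ha.le _)
              exact mul_le_mul_of_nonneg_left hhalf (Real.rpow_nonneg hb.le _)
          _ = (b - s) ^ (H - 1/2) * (a - s) ^ (H - 3/2) := by rw [e2]; ring
      rcases le_total θ₁ θ₂ with h | h
      · rw [max_eq_right h, min_eq_left h]
        exact main θ₁ θ₂ ht1s ht2s h
      · rw [max_eq_left h, min_eq_right h]
        calc (θ₁ - s) ^ (H-1) * (θ₂ - s) ^ (H-1)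
            = (θ₂ - s) ^ (H-1) * (θ₁ - s) ^ (H-1) := by ring
          _ ≤ (θ₁ - s) ^ (H - 1/2) * (θ₂ - s) ^ (H - 3/2) := main θ₂ θ₁ ht2s ht1s h
    have hgs : g s = s ^ (2-2*H) * ((θ₁ - s) ^ (H-1) * (θ₂ - s) ^ (H-1)) := rfl
    have hMm : (0:ℝ) ≤ (max θ₁ θ₂ - s) ^ (H - 1/2) * (min θ₁ θ₂ - s) ^ (H - 3/2) := by
      have : 0 < max θ₁ θ₂ - s := by
        rcases le_total θ₁ θ₂ with h | h
        · rw [max_eq_right h]; linarith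
        · rw [max_eq_left h]; linarith
      have h' : 0 < min θ₁ θ₂ - s := by
        rcases le_total θ₁ θ₂ with h | h
        · rw [min_eq_left h]; linarith
        · rw [min_eq_right h]; linarith
      positivity
    calc K * g s
        = c / (2 - 2*H) * ((θ₁ ^ (H-1) * θ₂ ^ (H-1) * s ^ (2-2*H)) *
            ((θ₁ - s) ^ (H-1) * (θ₂ - s) ^ (H-1))) := by rw [hK, hgs]; ring
      _ ≤ c / (2 - 2*H) * (1 * ((max θ₁ θ₂ - s) ^ (H - 1/2) * (min θ₁ θ₂ - s) ^ (H - 3/2))) := by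
          apply mul_le_mul_of_nonneg_left _ (by positivity)
          have h1 : (0:ℝ) ≤ (θ₁ - s) ^ (H-1) * (θ₂ - s) ^ (H-1) := by positivity
          calc (θ₁ ^ (H-1) * θ₂ ^ (H-1) * s ^ (2-2*H)) *
              ((θ₁ - s) ^ (H-1) * (θ₂ - s) ^ (H-1))
              ≤ 1 * ((θ₁ - s) ^ (H-1) * (θ₂ - s) ^ (H-1)) :=
                mul_le_mul_of_nonneg_right hone h1
            _ ≤ 1 * ((max θ₁ θ₂ - s) ^ (H - 1/2) * (min θ₁ θ₂ - s) ^ (H - 3/2)) := by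
                rw [one_mul, one_mul]; exact hmm
      _ = c / (2 - 2*H) * (max θ₁ θ₂ - s) ^ (H - 1/2) * (min θ₁ θ₂ - s) ^ (H - 3/2) := by ring
  calc (∫ v in Set.Ioo (0:ℝ) s, f v) = ∫ v in (0:ℝ)..s, f v := heq
    _ ≤ K * g s := key
    _ ≤ c / (2 - 2*H) * (max θ₁ θ₂ - s) ^ (H - 1/2) * (min θ₁ θ₂ - s) ^ (H - 3/2) := hfin
    _ = (cH H)^2 * (H - 1/2)^2 / (2 - 2*H) *
          (max θ₁ θ₂ - s) ^ (H - 1/2) * (min θ₁ θ₂ - s) ^ (H - 3/2) := by rw [hc]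
end

section
/- Let b̃ : ℝ → ℝ be bounded continuous, Θ ∈ ℝ, λ > 0, and suppose w : (-∞, Θ] → ℝ is a bounded C² function satisfying b̃(y) w'(y) + (1/2) w''(y) = λ w(y) for y < Θ, w(Θ) = 1, lim_{y→-∞} w(y) = 0, with 0 ≤ w ≤ 1 and w increasing. Then 0 ≤ w'(x) ≤ C(1 + λ) w(x) for all x ≤ Θ, where C depends only on ‖b̃‖_∞. -/
open MeasureTheory Real Filter

/-- If `w` is a bounded `C²` solution on `(-∞,Θ]` of `b̃ w' + (1/2) w'' = λ w` on `(-∞,Θ)`,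
with `w(Θ) = 1`, `w → 0` at `-∞`, `0 ≤ w ≤ 1` and `w` increasing, then
`0 ≤ w'(x) ≤ C(1+λ) w(x)` for all `x ≤ Θ`, where `C` depends only on `‖b̃‖_∞`. -/
theorem deriv_bound_of_ode :
    ∀ M : ℝ, 0 ≤ M → ∃ C > (0:ℝ), ∀ (btilde : ℝ → ℝ) (Θ lam : ℝ) (w : ℝ → ℝ),
      Continuous btilde → (∀ x, |btilde x| ≤ M) → 0 < lam →
      ContDiffOn ℝ 2 w (Set.Iic Θ) →
      (∀ y < Θ, btilde y * deriv w y + (1/2) * deriv (deriv w) y = lam * w y) →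
      w Θ = 1 →
      Tendsto w atBot (nhds 0) →
      (∀ x ≤ Θ, 0 ≤ w x ∧ w x ≤ 1) →
      MonotoneOn w (Set.Iic Θ) →
      ∀ x ≤ Θ, 0 ≤ deriv w x ∧ deriv w x ≤ C * (1 + lam) * w x := by
  intro M hM
  refine ⟨2 * M + 3, by linarith, ?_⟩
  intro btilde Θ lam w hb hbM hlam hw hODE hwΘ _hlim hw01 hmono
  -- basic derivative facts
  have hderiv1 : ∀ z < Θ, HasDerivAt w (deriv w z) z := by
    intro z hz
    exact ((hw.differentiableOn (by norm_num)).differentiableAt (Iic_mem_nhds hz)).hasDerivAt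
  have hw' : ContDiffOn ℝ 1 (deriv w) (Set.Iio Θ) := by
    exact ContDiffOn.deriv_of_isOpen (m := 1) (hw.mono Set.Iio_subset_Iic_self)
      isOpen_Iio (by norm_num)
  have hderiv2 : ∀ z < Θ, HasDerivAt (deriv w) (deriv (deriv w) z) z := fun z hz =>
    ((hw'.differentiableOn (by norm_num)).differentiableAt (Iio_mem_nhds hz)).hasDerivAt
  have hode' : ∀ z < Θ, deriv (deriv w) z = 2 * lam * w z - 2 * btilde z * deriv w z := by
    intro z hz
    have := hODE z hz
    linarith
  have hwc : ContinuousOn w (Set.Iic Θ) := hw.continuousOn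
  have hdc : ContinuousOn (deriv w) (Set.Iio Θ) := hw'.continuousOn
  -- nonnegativity of the derivative at differentiable points
  have hnn : ∀ x ≤ Θ, DifferentiableAt ℝ w x → 0 ≤ deriv w x := by
    intro x hx hdx
    have hder : HasDerivWithinAt w (deriv w x) (Set.Iio x) x :=
      hdx.hasDerivAt.hasDerivWithinAt
    rw [hasDerivWithinAt_iff_tendsto_slope,
      Set.diff_singleton_eq_self (by simp : x ∉ Set.Iio x)] at hder
    refine ge_of_tendsto hder ?_
    filter_upwards [self_mem_nhdsWithin] with y hy
    have hyx : y < x := hy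
    have hle : w y ≤ w x := hmono (le_trans hyx.le hx) hx hyx.le
    rw [slope_def_field]
    apply div_nonneg_of_nonpos <;> linarith
  -- the key upper bound at interior points
  have key : ∀ x < Θ, deriv w x ≤ (2 * M + 3) * (1 + lam) * w x := by
    intro x hx
    have hIcc : Set.Icc (x - 1) x ⊆ Set.Iic Θ := fun z hz => le_trans hz.2 hx.le
    obtain ⟨y, hy, hyd⟩ := exists_hasDerivAt_eq_slope w (deriv w)
      (by linarith : x - 1 < x) (hwc.mono hIcc)
      (fun z hz => hderiv1 z (lt_of_lt_of_le hz.2 hx.le))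
    have hyx : y < x := hy.2
    have hyl : x - 1 < y := hy.1
    have hyd' : deriv w y = w x - w (x - 1) := by
      rw [hyd]; ring_nf
    -- FTC for deriv w on [y, x]
    have hsub : Set.Icc y x ⊆ Set.Iio Θ := fun z hz => lt_of_le_of_lt hz.2 hx
    have hcontg : ContinuousOn (fun z => 2 * lam * w z - 2 * btilde z * deriv w z)
        (Set.Icc y x) := by
      apply ContinuousOn.sub
      · exact continuousOn_const.mul ((hwc.mono (fun z hz => Set.mem_Iic.mpr (hsub hz).le)))
      · exact (continuousOn_const.mul hb.continuousOn).mul (hdc.mono hsub)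
    have hintg : IntervalIntegrable (fun z => 2 * lam * w z - 2 * btilde z * deriv w z)
        volume y x := by
      apply ContinuousOn.intervalIntegrable
      rwa [Set.uIcc_of_le hyx.le]
    have hftc : ∫ z in y..x, (2 * lam * w z - 2 * btilde z * deriv w z)
        = deriv w x - deriv w y := by
      apply intervalIntegral.integral_eq_sub_of_hasDerivAt _ hintg
      intro t ht
      rw [Set.uIcc_of_le hyx.le] at ht
      have htΘ : t < Θ := lt_of_le_of_lt ht.2 hx
      have := hderiv2 t htΘ
      rwa [hode' t htΘ] at this
    -- FTC for w on [y, x]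
    have hintw' : IntervalIntegrable (deriv w) volume y x := by
      apply ContinuousOn.intervalIntegrable
      rw [Set.uIcc_of_le hyx.le]
      exact hdc.mono hsub
    have hftcw : ∫ z in y..x, deriv w z = w x - w y := by
      apply intervalIntegral.integral_eq_sub_of_hasDerivAt _ hintw'
      intro t ht
      rw [Set.uIcc_of_le hyx.le] at ht
      exact hderiv1 t (lt_of_le_of_lt ht.2 hx)
    -- pointwise bound on the integrand
    have hbound : ∀ z ∈ Set.Icc y x, 2 * lam * w z - 2 * btilde z * deriv w z
        ≤ 2 * lam * w x + 2 * M * deriv w z := by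
      intro z hz
      have hzΘ : z < Θ := hsub hz
      have hwz : w z ≤ w x := hmono hzΘ.le hx.le hz.2
      have hdz : 0 ≤ deriv w z := hnn z hzΘ.le (hderiv1 z hzΘ).differentiableAt
      have hbz := abs_le.1 (hbM z)
      nlinarith [mul_nonneg (by linarith : (0:ℝ) ≤ M + btilde z) hdz]
    have hintrhs : IntervalIntegrable (fun z => 2 * lam * w x + 2 * M * deriv w z)
        volume y x := by
      apply ContinuousOn.intervalIntegrable
      rw [Set.uIcc_of_le hyx.le]
      exact continuousOn_const.add (continuousOn_const.mul (hdc.mono hsub))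
    have hmonoI : ∫ z in y..x, (2 * lam * w z - 2 * btilde z * deriv w z)
        ≤ ∫ z in y..x, (2 * lam * w x + 2 * M * deriv w z) :=
      intervalIntegral.integral_mono_on hyx.le hintg hintrhs hbound
    have hrhs : ∫ z in y..x, (2 * lam * w x + 2 * M * deriv w z)
        = (x - y) * (2 * lam * w x) + 2 * M * (w x - w y) := by
      rw [intervalIntegral.integral_add intervalIntegrable_const
        (hintw'.const_mul (2 * M)), intervalIntegral.integral_const,
        intervalIntegral.integral_const_mul, hftcw]
      simp [smul_eq_mul]
    rw [hftc, hrhs] at hmonoI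
    have h0 : 0 ≤ w (x - 1) := (hw01 (x - 1) (by linarith)).1
    have h1 : 0 ≤ w y := (hw01 y (by linarith)).1
    have h2 : 0 ≤ w x := (hw01 x hx.le).1
    have h3 : w y ≤ w x := hmono (by linarith : y ≤ Θ) hx.le hyx.le
    have h4 : 0 ≤ lam * w x := mul_nonneg hlam.le h2
    have h5 : (x - y) * (2 * lam * w x) ≤ 1 * (2 * lam * w x) := by
      apply mul_le_mul_of_nonneg_right (by linarith) (by linarith)
    nlinarith [mul_nonneg hM h2, mul_nonneg (mul_nonneg hM hlam.le) h2]
  -- conclusion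
  intro x hx
  rcases eq_or_lt_of_le hx with heq | hlt
  · -- x = Θ
    subst heq
    by_cases hdx : DifferentiableAt ℝ w x
    · constructor
      · exact hnn x le_rfl hdx
      · -- bound the derivative at Θ by a limit of slopes
        have hder : HasDerivWithinAt w (deriv w x) (Set.Iio x) x :=
          hdx.hasDerivAt.hasDerivWithinAt
        rw [hasDerivWithinAt_iff_tendsto_slope,
          Set.diff_singleton_eq_self (by simp : x ∉ Set.Iio x)] at hder
        refine le_of_tendsto hder ?_
        filter_upwards [self_mem_nhdsWithin] with y hy
        have hyx : y < x := hy
        -- MVT on [y, x]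
        obtain ⟨c, hc, hcd⟩ := exists_hasDerivAt_eq_slope w (deriv w) hyx
          (hwc.mono (fun z hz => hz.2)) (fun z hz => hderiv1 z hz.2)
        have hcx : c < x := hc.2
        have hcb := key c hcx
        have hwc1 : w c ≤ 1 := (hw01 c hcx.le).2
        have hwc0 : 0 ≤ w c := (hw01 c hcx.le).1
        have hCnn : (0:ℝ) ≤ (2 * M + 3) * (1 + lam) := by nlinarith
        have hslope : slope w x y = deriv w c := by
          rw [slope_def_field, hcd]
          rw [div_eq_div_iff (by linarith : y - x ≠ 0) (by linarith : x - y ≠ 0)]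
          ring
        rw [hslope, hwΘ, mul_one]
        nlinarith
    · rw [deriv_zero_of_not_differentiableAt hdx]
      refine ⟨le_rfl, ?_⟩
      exact mul_nonneg (mul_nonneg (by linarith) (by linarith)) (hw01 x le_rfl).1
  · exact ⟨hnn x hx ((hderiv1 x hlt).differentiableAt), key x hlt⟩
end
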